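/- Let n ≥ 1, let S > 0, and let d : Fin n → ℝ satisfy 0 < d i ≤ S for all i. Let W = { w ∈ {0,1}^n : ∑_i d i · w i ≤ S } be the (finite, nonempty) set of feasible configurations, let e = (1,…,1) ∈ ℝ^n, and let r_max = max { r ∈ [0,1] : r·e ∈ convexHull(W) }; this maximum is attained and is positive. Let a(n) be the maximum of |det M| over n×n matrices with entries in {0,1}. Then there exist an integer k with 1 ≤ k ≤ a(n) and nonnegative integers (m_w)_{w∈W} such that ∑_{w∈W} m_w · w = k·e and k / (∑_{w∈W} m_w) = r_max. -/

import Mathlib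

/-- `a(p)`: the maximal value of `|det M|` over `p × p` matrices `M` with entries
in `{0,1}`. -/
noncomputable def maxBinDet (p : ℕ) : ℝ :=
  sSup {v : ℝ | ∃ M : Matrix (Fin p) (Fin p) ℝ,
    (∀ i j, M i j = 0 ∨ M i j = 1) ∧ v = |M.det|}

namespace Stmt2Aux
open Finset Matrix
attribute [local instance] Classical.propDecidable

noncomputable def vec (n : ℕ) (s : Finset (Fin n)) : Fin n → ℝ :=
  fun i => if i ∈ s then 1 else 0

lemma vec_injective (n : ℕ) : Function.Injective (vec n) := by
  intro s t h
  ext i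
  have := congrFun h i
  simp only [vec] at this
  by_cases hs : i ∈ s <;> by_cases ht : i ∈ t <;> simp [hs, ht] at this ⊢

lemma vec_nonneg (n : ℕ) (s : Finset (Fin n)) (i : Fin n) : 0 ≤ vec n s i := by
  unfold vec; split <;> norm_num

lemma vec_le_one (n : ℕ) (s : Finset (Fin n)) (i : Fin n) : vec n s i ≤ 1 := by
  unfold vec; split <;> norm_num

lemma vec_01 (n : ℕ) (s : Finset (Fin n)) (i : Fin n) : vec n s i = 0 ∨ vec n s i = 1 := by
  unfold vec; split <;> simp

lemma vec_empty (n : ℕ) : vec n ∅ = 0 := by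
  funext i; simp [vec]

def Sol (n : ℕ) (P : Finset (Fin n) → Prop) (μ : Finset (Fin n) → ℝ) : Prop :=
  (∀ s, 0 ≤ μ s) ∧ (∀ s, μ s ≠ 0 → P s ∧ s.Nonempty) ∧
    (∑ s, μ s • vec n s) = fun _ => (1 : ℝ)

def Indep (n : ℕ) (μ : Finset (Fin n) → ℝ) : Prop :=
  LinearIndependent ℝ (fun x : {s : Finset (Fin n) // μ s ≠ 0} => vec n ↑x)

lemma rel_zero {n : ℕ} {P : Finset (Fin n) → Prop} {μ c : Finset (Fin n) → ℝ}
    (hμ : Sol n P μ) (hc : ∀ s, c s ≠ 0 → μ s ≠ 0)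
    (hrel : (∑ s, c s • vec n s) = 0) (hneg : ∀ s, c s ≤ 0) : ∀ s, c s = 0 := by
  intro s₀
  by_contra h0
  obtain ⟨i, hi⟩ := (hμ.2.1 s₀ (hc s₀ h0)).2
  have hrel' : ∑ s, -(c s * vec n s i) = 0 := by
    have := congrFun hrel i
    rw [Finset.sum_apply] at this
    simp only [Pi.smul_apply, smul_eq_mul, Pi.zero_apply] at this
    rw [Finset.sum_neg_distrib, this, neg_zero]
  have hterm : ∀ s ∈ Finset.univ, (0:ℝ) ≤ -(c s * vec n s i) := by
    intro s _
    have := mul_nonpos_of_nonpos_of_nonneg (hneg s) (vec_nonneg n s i)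
    linarith
  have := (Finset.sum_eq_zero_iff_of_nonneg hterm).1 hrel' s₀ (Finset.mem_univ _)
  have hv : vec n s₀ i = 1 := by simp [vec, hi]
  rw [hv, mul_one] at this
  have : c s₀ = 0 := by linarith
  exact h0 this

lemma exists_dep {n : ℕ} {μ : Finset (Fin n) → ℝ} (h : ¬ Indep n μ) :
    ∃ c : Finset (Fin n) → ℝ, (∀ s, c s ≠ 0 → μ s ≠ 0) ∧
      (∑ s, c s • vec n s) = 0 ∧ ∃ s, c s ≠ 0 := by
  rw [Indep, Fintype.not_linearIndependent_iff] at h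
  obtain ⟨g, hg, x₀, hx₀⟩ := h
  set c : Finset (Fin n) → ℝ := fun s => if h : μ s ≠ 0 then g ⟨s, h⟩ else 0 with hc
  refine ⟨c, ?_, ?_, ⟨x₀, ?_⟩⟩
  · intro s hs
    by_contra h
    simp [hc, h] at hs
  · have h1 : (∑ s, c s • vec n s) = ∑ s ∈ Finset.univ.filter (fun s => μ s ≠ 0),
        c s • vec n s := by
      refine (Finset.sum_subset (Finset.subset_univ _) ?_).symm
      intro s _ hs
      simp only [Finset.mem_filter, Finset.mem_univ, true_and, not_not] at hs
      simp [hc, hs]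
    have h2 : ∑ s ∈ Finset.univ.filter (fun s => μ s ≠ 0), c s • vec n s
        = ∑ x : {s : Finset (Fin n) // μ s ≠ 0}, c ↑x • vec n ↑x :=
      Finset.sum_subtype _ (fun x => by simp) (fun s => c s • vec n s)
    rw [h1, h2, ← hg]
    apply Finset.sum_congr rfl
    intro x _
    simp [hc, x.2]
  · simpa [hc, x₀.2] using hx₀

lemma reduce {n : ℕ} {P : Finset (Fin n) → Prop} :
    ∀ (N : ℕ) (μ : Finset (Fin n) → ℝ),
      (Finset.univ.filter (fun s => μ s ≠ 0)).card ≤ N → Sol n P μ →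
      ∃ ν, Sol n P ν ∧ (∀ s, ν s ≠ 0 → μ s ≠ 0) ∧ Indep n ν ∧ ∑ s, ν s ≤ ∑ s, μ s := by
  intro N
  induction N with
  | zero =>
    intro μ hcard hμ
    have hz : ∀ s, μ s = 0 := by
      intro s
      by_contra h
      have : s ∈ Finset.univ.filter (fun s => μ s ≠ 0) := by simp [h]
      rw [Finset.card_eq_zero.1 (Nat.le_zero.1 hcard)] at this
      simp at this
    refine ⟨μ, hμ, fun s h => h, ?_, le_refl _⟩
    have : IsEmpty {s : Finset (Fin n) // μ s ≠ 0} := ⟨fun x => x.2 (hz x.1)⟩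
    exact linearIndependent_empty_type
  | succ N ih =>
    intro μ hcard hμ
    by_cases hI : Indep n μ
    · exact ⟨μ, hμ, fun s h => h, hI, le_refl _⟩
    obtain ⟨c₀, hc₀supp, hc₀rel, hc₀ne⟩ := exists_dep hI
    obtain ⟨c, hcsupp, hcrel, hcsum, s₀, hs₀⟩ :
        ∃ c : Finset (Fin n) → ℝ, (∀ s, c s ≠ 0 → μ s ≠ 0) ∧
          (∑ s, c s • vec n s) = 0 ∧ 0 ≤ ∑ s, c s ∧ ∃ s, 0 < c s := by
      by_cases hsc : 0 ≤ ∑ s, c₀ s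
      · refine ⟨c₀, hc₀supp, hc₀rel, hsc, ?_⟩
        by_contra h
        push_neg at h
        have := rel_zero hμ hc₀supp hc₀rel h
        obtain ⟨s, hs⟩ := hc₀ne
        exact hs (this s)
      · push_neg at hsc
        refine ⟨-c₀, ?_, ?_, ?_, ?_⟩
        · intro s hs; exact hc₀supp s (by simpa using hs)
        · rw [← neg_eq_zero, ← Finset.sum_neg_distrib]
          rw [← hc₀rel]
          apply Finset.sum_congr rfl; intro s _; simp
        · simp only [Pi.neg_apply, Finset.sum_neg_distrib]
          linarith
        · by_contra h
          push_neg at h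
          have h' : ∀ s, -c₀ s ≤ 0 := by intro s; simpa using h s
          have := rel_zero hμ (fun s hs => hc₀supp s (by simpa using hs)) ?_ h'
          · obtain ⟨s, hs⟩ := hc₀ne
            exact hs (by simpa using this s)
          · rw [← neg_eq_zero, ← Finset.sum_neg_distrib, ← hc₀rel]
            apply Finset.sum_congr rfl; intro s _; simp
    set Q := Finset.univ.filter (fun s => 0 < c s) with hQ
    have hQne : Q.Nonempty := ⟨s₀, by simp [hQ, hs₀]⟩
    set ε := Q.inf' hQne (fun s => μ s / c s) with hε
    have hμpos : ∀ s ∈ Q, 0 < μ s := by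
      intro s hs
      simp only [hQ, Finset.mem_filter] at hs
      have := hcsupp s (ne_of_gt hs.2)
      exact lt_of_le_of_ne (hμ.1 s) (Ne.symm this)
    have hεpos : 0 < ε := by
      rw [hε, Finset.lt_inf'_iff]
      intro s hs
      have hs' := hs
      simp only [hQ, Finset.mem_filter] at hs'
      exact div_pos (hμpos s hs) hs'.2
    obtain ⟨s₁, hs₁Q, hs₁⟩ := Finset.exists_mem_eq_inf' hQne (fun s => μ s / c s)
    have hcs₁ : 0 < c s₁ := by simp only [hQ, Finset.mem_filter] at hs₁Q; exact hs₁Q.2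
    set ν := fun s => μ s - ε * c s with hν
    have hνnn : ∀ s, 0 ≤ ν s := by
      intro s
      by_cases hpos : 0 < c s
      · have hεle : ε ≤ μ s / c s := by
          rw [hε]; exact Finset.inf'_le _ (by simp [hQ, hpos])
        rw [le_div_iff₀ hpos] at hεle
        simp only [hν]; linarith
      · push_neg at hpos
        have h1 : ε * c s ≤ 0 := mul_nonpos_of_nonneg_of_nonpos (le_of_lt hεpos) hpos
        have h2 := hμ.1 s
        simp only [hν]; linarith
    have hνsupp : ∀ s, ν s ≠ 0 → μ s ≠ 0 := by
      intro s hs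
      by_contra h
      have hcz : c s = 0 := by
        by_contra hcz
        exact (hcsupp s hcz) h
      simp [hν, h, hcz] at hs
    have hνs₁ : ν s₁ = 0 := by
      have hεval : ε = μ s₁ / c s₁ := hε.trans hs₁
      simp only [hν]
      rw [hεval, div_mul_cancel₀ _ (ne_of_gt hcs₁), sub_self]
    have hνSol : Sol n P ν := by
      refine ⟨hνnn, fun s hs => hμ.2.1 s (hνsupp s hs), ?_⟩
      have : (∑ s, ν s • vec n s) = (∑ s, μ s • vec n s) - ε • ∑ s, c s • vec n s := by
        rw [Finset.smul_sum, ← Finset.sum_sub_distrib]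
        apply Finset.sum_congr rfl
        intro s _
        rw [smul_smul, ← sub_smul]
      rw [this, hcrel, smul_zero, sub_zero, hμ.2.2]
    have hμs₁ : μ s₁ ≠ 0 := hcsupp s₁ (ne_of_gt hcs₁)
    have hssub : Finset.univ.filter (fun s => ν s ≠ 0)
        ⊂ Finset.univ.filter (fun s => μ s ≠ 0) := by
      constructor
      · intro s hs
        simp only [Finset.mem_filter, Finset.mem_univ, true_and] at hs ⊢
        exact hνsupp s hs
      · intro h
        have := h (by simp [hμs₁] : s₁ ∈ Finset.univ.filter (fun s => μ s ≠ 0))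
        simp [hνs₁] at this
    have hcard' : (Finset.univ.filter (fun s => ν s ≠ 0)).card ≤ N := by
      have := Finset.card_lt_card hssub
      omega
    obtain ⟨ν', hν'Sol, hν'supp, hν'I, hν'sum⟩ := ih ν hcard' hνSol
    refine ⟨ν', hν'Sol, fun s h => hνsupp s (hν'supp s h), hν'I, ?_⟩
    have hsum : ∑ s, ν s = (∑ s, μ s) - ε * ∑ s, c s := by
      rw [Finset.mul_sum, ← Finset.sum_sub_distrib]
    have : ε * ∑ s, c s ≥ 0 := mul_nonneg (le_of_lt hεpos) hcsum
    calc ∑ s, ν' s ≤ ∑ s, ν s := hν'sum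
    _ ≤ ∑ s, μ s := by rw [hsum]; linarith

lemma sol_unique {n : ℕ} {P : Finset (Fin n) → Prop} {μ μ₀ : Finset (Fin n) → ℝ}
    (hμ : Sol n P μ) (hI : Indep n μ) (hμ₀ : Sol n P μ₀)
    (hsupp : ∀ s, μ₀ s ≠ 0 → μ s ≠ 0) : μ₀ = μ := by
  have key : ∑ x : {s : Finset (Fin n) // μ s ≠ 0}, (μ ↑x - μ₀ ↑x) • vec n ↑x = 0 := by
    have h2 : ∑ x : {s : Finset (Fin n) // μ s ≠ 0}, (μ ↑x - μ₀ ↑x) • vec n ↑x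
        = ∑ s ∈ Finset.univ.filter (fun s => μ s ≠ 0), (μ s - μ₀ s) • vec n s :=
      (Finset.sum_subtype _ (fun x => by simp) (fun s => (μ s - μ₀ s) • vec n s)).symm
    have h1 : ∑ s ∈ Finset.univ.filter (fun s => μ s ≠ 0), (μ s - μ₀ s) • vec n s
        = ∑ s, (μ s - μ₀ s) • vec n s := by
      apply Finset.sum_subset (Finset.subset_univ _)
      intro s _ hs
      simp only [Finset.mem_filter, Finset.mem_univ, true_and, not_not] at hs
      have h0 : μ₀ s = 0 := by
        by_contra h
        exact (hsupp s h) hs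
      simp [hs, h0]
    rw [h2, h1]
    have h3 : ∑ s, (μ s - μ₀ s) • vec n s
        = (∑ s, μ s • vec n s) - ∑ s, μ₀ s • vec n s := by
      rw [← Finset.sum_sub_distrib]
      apply Finset.sum_congr rfl
      intro s _; rw [sub_smul]
    rw [h3, hμ.2.2, hμ₀.2.2, sub_self]
  have hz := Fintype.linearIndependent_iff.1 hI _ key
  funext s
  by_cases h : μ s ≠ 0
  · have := hz ⟨s, h⟩
    simp only at this
    linarith [this]
  · push_neg at h
    rw [h]
    by_contra h0
    exact (hsupp s h0) h

lemma A_finite {n : ℕ} (P : Finset (Fin n) → Prop) :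
    {t : ℝ | ∃ μ, Sol n P μ ∧ Indep n μ ∧ t = ∑ s, μ s}.Finite := by
  set g : Finset (Finset (Fin n)) → ℝ := fun T =>
    if h : ∃ μ₀, Sol n P μ₀ ∧ (∀ s, μ₀ s ≠ 0 → s ∈ T) then ∑ s, h.choose s else 0 with hg
  apply Set.Finite.subset (Set.finite_range g)
  rintro t ⟨μ, hμ, hI, rfl⟩
  refine ⟨Finset.univ.filter (fun s => μ s ≠ 0), ?_⟩
  have hex : ∃ μ₀, Sol n P μ₀ ∧
      (∀ s, μ₀ s ≠ 0 → s ∈ Finset.univ.filter (fun s => μ s ≠ 0)) :=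
    ⟨μ, hμ, fun s h => by simp [h]⟩
  rw [hg]
  simp only [dif_pos hex]
  congr 1
  refine sol_unique hμ hI hex.choose_spec.1 ?_
  intro s h
  have := hex.choose_spec.2 s h
  simpa using this

lemma sol_one_le {n : ℕ} (hn : 0 < n) {P : Finset (Fin n) → Prop}
    {μ : Finset (Fin n) → ℝ} (h : Sol n P μ) : 1 ≤ ∑ s, μ s := by
  have h0 := congrFun h.2.2 ⟨0, hn⟩
  rw [Finset.sum_apply] at h0
  simp only [Pi.smul_apply, smul_eq_mul] at h0
  calc (1:ℝ) = ∑ s, μ s * vec n s ⟨0, hn⟩ := h0.symm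
  _ ≤ ∑ s, μ s :=
      Finset.sum_le_sum (fun s _ => mul_le_of_le_one_right (h.1 s) (vec_le_one n s _))

lemma sol_mem_hull {n : ℕ} {P : Finset (Fin n) → Prop} {μ : Finset (Fin n) → ℝ}
    {W : Set (Fin n → ℝ)} (h : Sol n P μ)
    (hvW : ∀ s, μ s ≠ 0 → vec n s ∈ W) (hpos : 0 < ∑ s, μ s) :
    (∑ s, μ s)⁻¹ • (fun _ => (1:ℝ) : Fin n → ℝ) ∈ convexHull ℝ W := by
  set T := Finset.univ.filter (fun s => μ s ≠ 0) with hT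
  have h1 : ∑ s ∈ T, μ s = ∑ s, μ s := by
    apply Finset.sum_subset (Finset.subset_univ _)
    intro s _ hs
    simp only [hT, Finset.mem_filter, Finset.mem_univ, true_and, not_not] at hs
    exact hs
  have h2 : ∑ s ∈ T, μ s • vec n s = ∑ s, μ s • vec n s := by
    apply Finset.sum_subset (Finset.subset_univ _)
    intro s _ hs
    simp only [hT, Finset.mem_filter, Finset.mem_univ, true_and, not_not] at hs
    simp [hs]
  have hmem := Finset.centerMass_mem_convexHull T (fun s _ => h.1 s)
    (by rw [h1]; exact hpos)
    (fun s hs => hvW s (by simpa [hT] using hs))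
  rw [Finset.centerMass, h1, h2, h.2.2] at hmem
  exact hmem

lemma det_int {p : ℕ} (A : Matrix (Fin p) (Fin p) ℝ) (h : ∀ i j, A i j = 0 ∨ A i j = 1) :
    ∃ z : ℤ, (z : ℝ) = A.det := by
  refine ⟨(Matrix.of fun i j => if A i j = 1 then (1:ℤ) else 0).det, ?_⟩
  have hmap : (Matrix.of fun i j => if A i j = 1 then (1:ℤ) else 0).map
      (Int.cast : ℤ → ℝ) = A := by
    ext i j
    simp only [Matrix.map_apply, Matrix.of_apply]
    rcases h i j with h0 | h1
    · rw [if_neg (by rw [h0]; norm_num), h0]; simp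
    · rw [if_pos h1, h1]; simp
  have h2 := RingHom.map_det (Int.castRingHom ℝ)
    (Matrix.of fun i j => if A i j = 1 then (1:ℤ) else 0)
  rw [RingHom.mapMatrix_apply, Int.coe_castRingHom, hmap] at h2
  rw [← h2]

lemma abs_det_le_maxBinDet {p : ℕ} (M : Matrix (Fin p) (Fin p) ℝ)
    (h01 : ∀ i j, M i j = 0 ∨ M i j = 1) : |M.det| ≤ maxBinDet p := by
  have hfin : {v : ℝ | ∃ M : Matrix (Fin p) (Fin p) ℝ,
      (∀ i j, M i j = 0 ∨ M i j = 1) ∧ v = |M.det|}.Finite := by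
    have hsub : {v : ℝ | ∃ M : Matrix (Fin p) (Fin p) ℝ,
        (∀ i j, M i j = 0 ∨ M i j = 1) ∧ v = |M.det|} ⊆
        (fun M : Matrix (Fin p) (Fin p) ℝ => |M.det|) ''
          {M : Matrix (Fin p) (Fin p) ℝ | ∀ i j, M i j = 0 ∨ M i j = 1} := by
      rintro v ⟨M, hM, rfl⟩
      exact ⟨M, hM, rfl⟩
    refine Set.Finite.subset (Set.Finite.image _ ?_) hsub
    have hsub2 : {M : Matrix (Fin p) (Fin p) ℝ | ∀ i j, M i j = 0 ∨ M i j = 1} ⊆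
        Set.pi Set.univ (fun _ : Fin p => Set.pi Set.univ
          (fun _ : Fin p => ({0, 1} : Set ℝ))) := by
      intro M hM
      intro i _
      intro j _
      rcases hM i j with h | h <;> simp [h]
    exact Set.Finite.subset
      (Set.Finite.pi fun _ => Set.Finite.pi fun _ =>
        (Set.finite_singleton (1:ℝ)).insert (0:ℝ)) hsub2
  exact le_csSup hfin.bddAbove ⟨M, h01, rfl⟩

lemma cramer_step {n : ℕ} (Tfin : Finset (Fin n → ℝ))
    (hT01 : ∀ y ∈ Tfin, ∀ i, y i = 0 ∨ y i = 1)
    (hTind : LinearIndependent ℝ ((↑) : (↑Tfin : Set (Fin n → ℝ)) → (Fin n → ℝ)))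
    (ρ : (Fin n → ℝ) → ℝ) (hρs : ∀ y, ρ y ≠ 0 → y ∈ Tfin) (hρnn : ∀ y, 0 ≤ ρ y)
    (hsum : ∑ y ∈ Tfin, ρ y • y = fun _ => (1:ℝ)) :
    ∃ k : ℕ, 1 ≤ k ∧ (k : ℝ) ≤ maxBinDet n ∧ ∀ y, ∃ my : ℕ, (my : ℝ) = (k : ℝ) * ρ y := by
  classical
  obtain ⟨b, hbt₀, hTb, hspan_t₀, hbindep⟩ :=
    exists_linearIndepOn_id_extension hTind
      (Set.subset_union_left (t := Set.range (fun i : Fin n => Pi.single i (1:ℝ))))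
  have hspan : ⊤ ≤ Submodule.span ℝ b := by
    rw [← (Pi.basisFun ℝ (Fin n)).span_eq]
    apply Submodule.span_le.2
    rintro y ⟨i, rfl⟩
    have hmem : Pi.single i (1:ℝ) ∈ (↑Tfin : Set (Fin n → ℝ)) ∪
        Set.range (fun i : Fin n => Pi.single i (1:ℝ)) := Or.inr ⟨i, rfl⟩
    have := hspan_t₀ hmem
    rwa [Pi.basisFun_apply]
  have hb01 : ∀ y ∈ b, ∀ i, y i = 0 ∨ y i = 1 := by
    intro y hy i
    rcases hbt₀ hy with h | ⟨j, rfl⟩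
    · exact hT01 y h i
    · simp only [Pi.single_apply]; split <;> simp
  let B : Module.Basis ↥b ℝ (Fin n → ℝ) := Module.Basis.mk hbindep.linearIndependent (by simpa [Subtype.range_coe] using hspan)
  haveI : Fintype ↥b := FiniteDimensional.fintypeBasisIndex B
  have hcard : Fintype.card ↥b = n := by
    have h1 := Module.finrank_eq_card_basis B
    rw [Module.finrank_fin_fun] at h1
    exact h1.symm
  let φ : Fin n ≃ ↥b := (Fintype.equivFinOfCardEq hcard).symm
  let B' : Module.Basis (Fin n) ℝ (Fin n → ℝ) := B.reindex φ.symm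
  have hB' : ∀ j, (B' j : Fin n → ℝ) = ↑(φ j) := by
    intro j
    show B.reindex φ.symm j = _
    rw [Module.Basis.reindex_apply, Equiv.symm_symm]
    show (Module.Basis.mk hbindep.linearIndependent _) (φ j) = _
    rw [Module.Basis.coe_mk, id]
  have hB'01 : ∀ j i, B' j i = 0 ∨ B' j i = 1 := fun j i => by
    rw [hB']; exact hb01 _ (φ j).2 i
  let Eb := Pi.basisFun ℝ (Fin n)
  let M : Matrix (Fin n) (Fin n) ℝ := Eb.toMatrix ⇑B'
  have hM : ∀ i j, M i j = B' j i := fun i j => by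
    show Eb.toMatrix ⇑B' i j = _
    rw [Module.Basis.toMatrix_apply, Pi.basisFun_repr]
  haveI : Invertible M := Eb.invertibleToMatrix B'
  have hdet : M.det ≠ 0 := (Matrix.isUnit_det_of_invertible M).ne_zero
  set μh : Fin n → ℝ := fun j => ρ (B' j) with hμh
  have hsum_b : ∑ j, ρ (B' j) • (B' j : Fin n → ℝ) = fun _ => (1:ℝ) := by
    have e1 : ∑ j, ρ (B' j) • (B' j : Fin n → ℝ)
        = ∑ x : ↥b, ρ ↑x • (↑x : Fin n → ℝ) := by
      rw [← Equiv.sum_comp φ (fun x : ↥b => ρ ↑x • (↑x : Fin n → ℝ))]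
      apply Finset.sum_congr rfl
      intro j _
      rw [hB' j]
    have e2 : ∑ x : ↥b, ρ ↑x • (↑x : Fin n → ℝ) = ∑ y ∈ b.toFinset, ρ y • y := by
      rw [← Finset.sum_set_coe]
    have e3 : ∑ y ∈ b.toFinset, ρ y • y = ∑ y ∈ Tfin, ρ y • y := by
      refine (Finset.sum_subset ?_ ?_).symm
      · intro y hy
        rw [Set.mem_toFinset]
        exact hTb hy
      · intro y _ hy
        have : ρ y = 0 := by
          by_contra h
          exact hy (hρs y h)
        rw [this, zero_smul]
    rw [e1, e2, e3, hsum]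
  have hMμ : M *ᵥ μh = fun _ => (1:ℝ) := by
    funext i
    have h1 : (M *ᵥ μh) i = ∑ j, M i j * μh j := rfl
    have h2 := congrFun hsum_b i
    rw [Finset.sum_apply] at h2
    simp only [Pi.smul_apply, smul_eq_mul] at h2
    rw [h1, ← h2]
    apply Finset.sum_congr rfl
    intro j _
    rw [hM i j, hμh, mul_comm]
  have hMinj : Function.Injective (M.mulVec) := fun x y hxy => by
    have := congrArg (fun v => (⅟M) *ᵥ v) hxy
    simpa [Matrix.mulVec_mulVec, invOf_mul_self, Matrix.one_mulVec] using this
  have hcram : M.det • μh = Matrix.cramer M (fun _ => (1:ℝ)) := by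
    apply hMinj
    rw [Matrix.mulVec_smul, hMμ, Matrix.mulVec_cramer]
  obtain ⟨D, hD⟩ := det_int M (fun i j => by rw [hM]; exact hB'01 j i)
  have hD0 : D ≠ 0 := by
    intro h
    rw [h] at hD
    exact hdet (by exact_mod_cast hD.symm)
  have hk : ((D.natAbs : ℕ) : ℝ) = |(D:ℝ)| := by
    simp [Nat.cast_natAbs]
  refine ⟨D.natAbs, Int.natAbs_pos.2 hD0, ?_, ?_⟩
  · rw [hk, hD]
    exact abs_det_le_maxBinDet M (fun i j => by rw [hM]; exact hB'01 j i)
  · intro y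
    by_cases hρy : ρ y = 0
    · exact ⟨0, by simp [hρy]⟩
    · have hyb : y ∈ b := hTb (hρs y hρy)
      obtain ⟨j, hj⟩ : ∃ j, (B' j : Fin n → ℝ) = y :=
        ⟨φ.symm ⟨y, hyb⟩, by rw [hB', Equiv.apply_symm_apply]⟩
      obtain ⟨N, hN⟩ := det_int (M.updateCol j (fun _ => (1:ℝ)))
        (fun i j' => by
          rw [Matrix.updateCol_apply]
          split
          · right; rfl
          · rw [hM]; exact hB'01 j' i)
      have hDj : (D:ℝ) * μh j = (N:ℝ) := by
        have := congrFun hcram j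
        simp only [Pi.smul_apply, smul_eq_mul] at this
        rw [Matrix.cramer_apply] at this
        rw [hD, this, hN]
      have hρval : ρ y = μh j := by rw [hμh]; simp only [hj]
      have hval : ((if 0 ≤ D then N else -N : ℤ) : ℝ) = (D.natAbs : ℝ) * ρ y := by
        rw [hρval, hk]
        by_cases hDpos : 0 ≤ D
        · rw [if_pos hDpos, abs_of_nonneg (by exact_mod_cast hDpos), ← hDj]
        · rw [if_neg hDpos]
          push_neg at hDpos
          have : ((D:ℝ)) < 0 := by exact_mod_cast hDpos
          rw [abs_of_neg this]
          push_cast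
          linarith [hDj]
      have hnn : (0:ℝ) ≤ ((if 0 ≤ D then N else -N : ℤ) : ℝ) := by
        rw [hval]
        exact mul_nonneg (by positivity) (hρnn y)
      refine ⟨(if 0 ≤ D then N else -N : ℤ).toNat, ?_⟩
      rw [← hval]
      have h0 : (0:ℤ) ≤ (if 0 ≤ D then N else -N : ℤ) := by exact_mod_cast hnn
      rw [← Int.toNat_of_nonneg h0]
      push_cast
      rw [Int.toNat_of_nonneg h0]

end Stmt2Aux

open Stmt2Aux in
/-- For demands `d : Fin n → ℝ` with `0 < d i ≤ S`, letting
`W = {w ∈ {0,1}^n : ∑ d i * w i ≤ S}` be the feasible configurations,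
`e = (1,…,1)` and `r_max = sup {r ∈ [0,1] : r • e ∈ convexHull W}`, the maximum is
attained and positive, and there are `k` with `1 ≤ k ≤ a(n)` and nonnegative
integers `(m_w)` supported on `W` with `∑ m_w • w = k • e` and `k / (∑ m_w) = r_max`. -/
theorem stmt_2 (n : ℕ) (hn : 1 ≤ n) (S : ℝ) (hS : 0 < S) (d : Fin n → ℝ)
    (hd : ∀ i, 0 < d i ∧ d i ≤ S)
    (W : Set (Fin n → ℝ))
    (hW : W = {w | (∀ i, w i = 0 ∨ w i = 1) ∧ ∑ i, d i * w i ≤ S})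
    (e : Fin n → ℝ) (he : e = fun _ => 1)
    (rmax : ℝ)
    (hrmax : rmax = sSup {r : ℝ | 0 ≤ r ∧ r ≤ 1 ∧ r • e ∈ convexHull ℝ W}) :
    (0 < rmax ∧ rmax • e ∈ convexHull ℝ W) ∧
    ∃ k : ℕ, 1 ≤ k ∧ (k : ℝ) ≤ maxBinDet n ∧
      ∃ m : (Fin n → ℝ) → ℕ,
        (Function.support m).Finite ∧ (∀ w, m w ≠ 0 → w ∈ W) ∧
        (∑ᶠ w, m w • w) = k • e ∧
        (k : ℝ) / (∑ᶠ w, (m w : ℝ)) = rmax := by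
  classical
  subst hW he
  set P : Finset (Fin n) → Prop := fun s => ∑ i ∈ s, d i ≤ S with hP
  set Wset : Set (Fin n → ℝ) :=
    {w | (∀ i, w i = 0 ∨ w i = 1) ∧ ∑ i, d i * w i ≤ S} with hWset
  have hsumd : ∀ s : Finset (Fin n), (∑ i, d i * vec n s i) = ∑ i ∈ s, d i := by
    intro s
    simp only [vec, mul_ite, mul_one, mul_zero]
    rw [Finset.sum_ite_mem, Finset.univ_inter]
  have hvecW : ∀ s : Finset (Fin n), P s → vec n s ∈ Wset := by
    intro s hs
    exact ⟨fun i => vec_01 n s i, by rw [hsumd]; exact hs⟩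
  have hWvec : ∀ w ∈ Wset, ∃ s, P s ∧ vec n s = w := by
    intro w hw
    have hv : vec n (Finset.univ.filter (fun i => w i = 1)) = w := by
      funext i
      simp only [vec, Finset.mem_filter, Finset.mem_univ, true_and]
      rcases hw.1 i with h | h <;> simp [h]
    refine ⟨Finset.univ.filter (fun i => w i = 1), ?_, hv⟩
    have h2 := hw.2
    rw [← hv] at h2
    rw [hsumd] at h2
    exact h2
  set F : Finset (Finset (Fin n)) := Finset.univ.filter P with hF
  set Wfin : Finset (Fin n → ℝ) := F.image (vec n) with hWfin
  have hWeq : Wset = ↑Wfin := by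
    ext w
    constructor
    · intro hw
      obtain ⟨s, hs, hv⟩ := hWvec w hw
      exact Finset.mem_coe.2 (Finset.mem_image.2 ⟨s, by simp [hF, hs], hv⟩)
    · intro hw
      obtain ⟨s, hs, rfl⟩ := Finset.mem_image.1 (Finset.mem_coe.1 hw)
      exact hvecW s (by simpa [hF] using hs)
  set A : Set ℝ := {t | ∃ μ, Sol n P μ ∧ Indep n μ ∧ t = ∑ s, μ s} with hA
  have hAfin : A.Finite := A_finite P
  have hAne : A.Nonempty := by
    set μ₁ : Finset (Fin n) → ℝ := fun s => if ∃ i : Fin n, s = {i} then 1 else 0 with hμ₁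
    have hSol : Sol n P μ₁ := by
      refine ⟨fun s => ?_, fun s hs => ?_, ?_⟩
      · simp only [hμ₁]; split <;> norm_num
      · simp only [hμ₁] at hs
        by_cases h : ∃ i : Fin n, s = {i}
        · obtain ⟨i, rfl⟩ := h
          refine ⟨?_, Finset.singleton_nonempty i⟩
          show ∑ j ∈ ({i} : Finset (Fin n)), d j ≤ S
          rw [Finset.sum_singleton]
          exact (hd i).2
        · simp [h] at hs
      · have h1 : (∑ s, μ₁ s • vec n s)
            = ∑ s ∈ Finset.univ.filter (fun s : Finset (Fin n) => ∃ i : Fin n, s = {i}),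
                vec n s := by
          rw [Finset.sum_filter]
          apply Finset.sum_congr rfl
          intro s _
          simp only [hμ₁]
          by_cases h : ∃ i : Fin n, s = {i} <;> simp [h]
        have h2 : Finset.univ.filter (fun s : Finset (Fin n) => ∃ i : Fin n, s = {i})
            = Finset.univ.image (fun i : Fin n => ({i} : Finset (Fin n))) := by
          ext s; simp [eq_comm]
        rw [h1, h2, Finset.sum_image (fun i _ j _ h => Finset.singleton_injective h)]
        funext j
        rw [Finset.sum_apply]
        have h3 : ∀ i : Fin n, vec n ({i} : Finset (Fin n)) j = if j = i then 1 else 0 := by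
          intro i; simp [vec]
        simp only [h3]
        rw [Finset.sum_ite_eq Finset.univ j (fun _ => (1:ℝ))]
        simp
    obtain ⟨ν, hνSol, _, hνI, _⟩ := reduce _ μ₁ (le_refl _) hSol
    exact ⟨∑ s, ν s, ν, hνSol, hνI, rfl⟩
  obtain ⟨tstar, htA, htmin⟩ := Set.exists_min_image A id hAfin hAne
  obtain ⟨μst, hμstSol, hμstI, hμstSum⟩ := htA
  have ht1 : (1:ℝ) ≤ tstar := by rw [hμstSum]; exact sol_one_le hn hμstSol
  have htpos : (0:ℝ) < tstar := lt_of_lt_of_le zero_lt_one ht1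
  have hconv : tstar⁻¹ • (fun _ => (1:ℝ) : Fin n → ℝ) ∈ convexHull ℝ Wset := by
    have h := sol_mem_hull (W := Wset) hμstSol
      (fun s hs => hvecW s (hμstSol.2.1 s hs).1)
      (by rw [← hμstSum]; exact htpos)
    rwa [← hμstSum] at h
  have hub : ∀ r : ℝ, 0 ≤ r → r ≤ 1 →
      r • (fun _ => (1:ℝ) : Fin n → ℝ) ∈ convexHull ℝ Wset → r ≤ tstar⁻¹ := by
    intro r hr0 hr1 hrmem
    rcases eq_or_lt_of_le hr0 with h | hrpos
    · rw [← h]; exact inv_nonneg.2 htpos.le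
    rw [hWeq, Finset.convexHull_eq] at hrmem
    obtain ⟨w, hw0, hw1, hcm⟩ := hrmem
    rw [Finset.centerMass_eq_of_sum_1 _ _ hw1] at hcm
    simp only [id] at hcm
    have hImg : ∑ s ∈ F, w (vec n s) • vec n s = r • (fun _ => (1:ℝ) : Fin n → ℝ) := by
      rw [← hcm, hWfin, Finset.sum_image (fun a _ b _ h => vec_injective n h)]
    set F' : Finset (Finset (Fin n)) := F.filter (fun s => s.Nonempty) with hF'
    have hImg' : ∑ s ∈ F', w (vec n s) • vec n s = r • (fun _ => (1:ℝ) : Fin n → ℝ) := by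
      rw [← hImg]
      apply Finset.sum_subset (Finset.filter_subset _ _)
      intro s hsF hs
      have hse : s = ∅ := by
        rw [Finset.mem_filter] at hs
        push_neg at hs
        have := hs hsF
        exact this
      rw [hse, vec_empty, smul_zero]
    set μ : Finset (Fin n) → ℝ := fun s => if s ∈ F' then w (vec n s) / r else 0 with hμdef
    have hwnn : ∀ s ∈ F, 0 ≤ w (vec n s) := fun s hs =>
      hw0 _ (by rw [hWfin]; exact Finset.mem_image_of_mem _ hs)
    have hμSol : Sol n P μ := by
      refine ⟨fun s => ?_, fun s hs => ?_, ?_⟩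
      · simp only [hμdef]
        by_cases h : s ∈ F'
        · rw [if_pos h]
          exact div_nonneg (hwnn s (Finset.mem_of_mem_filter _ h)) hrpos.le
        · rw [if_neg h]
      · simp only [hμdef] at hs
        by_cases h : s ∈ F'
        · rw [hF', Finset.mem_filter] at h
          refine ⟨?_, h.2⟩
          have := h.1
          rw [hF, Finset.mem_filter] at this
          exact this.2
        · simp [h] at hs
      · have hterm : ∀ s : Finset (Fin n),
            μ s • vec n s = if s ∈ F' then (w (vec n s) / r) • vec n s else 0 := by
          intro s
          simp only [hμdef]
          by_cases h : s ∈ F' <;> simp [h]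
        have hstep : (∑ s, μ s • vec n s) = ∑ s ∈ F', (w (vec n s) / r) • vec n s := by
          rw [Finset.sum_congr rfl (fun s _ => hterm s), Finset.sum_ite_mem,
            Finset.univ_inter]
        rw [hstep]
        have h4 : ∑ s ∈ F', (w (vec n s) / r) • vec n s
            = r⁻¹ • ∑ s ∈ F', w (vec n s) • vec n s := by
          rw [Finset.smul_sum]
          apply Finset.sum_congr rfl
          intro s _
          rw [smul_smul, div_eq_inv_mul]
        rw [h4, hImg', smul_smul, inv_mul_cancel₀ (ne_of_gt hrpos), one_smul]
    have hμsum_le : ∑ s, μ s ≤ 1 / r := by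
      have h1 : ∑ s, μ s = ∑ s ∈ F', w (vec n s) / r := by
        simp only [hμdef]
        rw [Finset.sum_ite_mem, Finset.univ_inter]
      have h2 : ∑ s ∈ F', w (vec n s) / r ≤ ∑ s ∈ F, w (vec n s) / r :=
        Finset.sum_le_sum_of_subset_of_nonneg (Finset.filter_subset _ _)
          (fun s hs _ => div_nonneg (hwnn s hs) hrpos.le)
      have h3 : ∑ s ∈ F, w (vec n s) / r = 1 / r := by
        rw [← Finset.sum_div]
        congr 1
        rw [← hw1, hWfin, Finset.sum_image (fun a _ b _ h => vec_injective n h)]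
      linarith
    obtain ⟨ν, hνSol, _, hνI, hνsum⟩ := reduce _ μ (le_refl _) hμSol
    have hts : tstar ≤ ∑ s, ν s := htmin _ ⟨ν, hνSol, hνI, rfl⟩
    have hle : tstar ≤ 1 / r := le_trans hts (le_trans hνsum hμsum_le)
    rw [le_div_iff₀ hrpos] at hle
    rw [inv_eq_one_div, le_div_iff₀ htpos]
    linarith [mul_comm r tstar]
  have hmemR : tstar⁻¹ ∈ {r : ℝ | 0 ≤ r ∧ r ≤ 1 ∧
      r • (fun _ => (1:ℝ) : Fin n → ℝ) ∈ convexHull ℝ Wset} := by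
    refine ⟨inv_nonneg.2 htpos.le, ?_, hconv⟩
    rw [inv_eq_one_div]
    exact div_le_one_of_le₀ ht1 htpos.le
  have hrmax_eq : rmax = tstar⁻¹ := by
    rw [hrmax]
    apply le_antisymm
    · exact csSup_le ⟨tstar⁻¹, hmemR⟩ (fun r hr => hub r hr.1 hr.2.1 hr.2.2)
    · exact le_csSup ⟨1, fun r hr => hr.2.1⟩ hmemR
  refine ⟨⟨by rw [hrmax_eq]; exact inv_pos.2 htpos, by rw [hrmax_eq]; exact hconv⟩, ?_⟩
  set ρ : (Fin n → ℝ) → ℝ :=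
    fun y => ∑ s ∈ Finset.univ.filter (fun s => vec n s = y), μst s with hρ
  set Tfin : Finset (Fin n → ℝ) :=
    (Finset.univ.filter (fun s => μst s ≠ 0)).image (vec n) with hTfin
  have hρvec : ∀ s, ρ (vec n s) = μst s := by
    intro s
    simp only [hρ]
    have h5 : Finset.univ.filter (fun s' => vec n s' = vec n s) = {s} := by
      ext s'
      simp only [Finset.mem_filter, Finset.mem_univ, true_and, Finset.mem_singleton]
      exact ⟨fun h => vec_injective n h, fun h => by rw [h]⟩
    rw [h5, Finset.sum_singleton]
  have hρne : ∀ y, ρ y ≠ 0 → ∃ s, μst s ≠ 0 ∧ vec n s = y := by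
    intro y hy
    by_contra h
    push_neg at h
    apply hy
    simp only [hρ]
    apply Finset.sum_eq_zero
    intro s hs
    simp only [Finset.mem_filter, Finset.mem_univ, true_and] at hs
    by_contra h0
    exact (h s h0) hs
  have hρs : ∀ y, ρ y ≠ 0 → y ∈ Tfin := by
    intro y hy
    obtain ⟨s, h1, h2⟩ := hρne y hy
    rw [hTfin]
    exact Finset.mem_image.2 ⟨s, by simp [h1], h2⟩
  have hρnn : ∀ y, 0 ≤ ρ y := fun y => Finset.sum_nonneg (fun s _ => hμstSol.1 s)
  have hT01 : ∀ y ∈ Tfin, ∀ i, y i = 0 ∨ y i = 1 := by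
    intro y hy i
    obtain ⟨s, _, rfl⟩ := Finset.mem_image.1 hy
    exact vec_01 n s i
  have hTset : (↑Tfin : Set (Fin n → ℝ)) = vec n '' {s | μst s ≠ 0} := by
    rw [hTfin, Finset.coe_image]
    congr 1
    ext s; simp
  have hTind : LinearIndependent ℝ ((↑) : (↑Tfin : Set (Fin n → ℝ)) → (Fin n → ℝ)) := by
    rw [hTset]
    exact (linearIndepOn_iff_image ((vec_injective n).injOn)).1 hμstI
  have hsumT : ∑ y ∈ Tfin, ρ y • y = fun _ => (1:ℝ) := by
    rw [hTfin, Finset.sum_image (fun a _ b _ h => vec_injective n h)]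
    rw [Finset.sum_congr rfl
      (fun s _ => by rw [hρvec] :
        ∀ s ∈ Finset.univ.filter (fun s => μst s ≠ 0),
          ρ (vec n s) • vec n s = μst s • vec n s)]
    rw [← hμstSol.2.2]
    apply Finset.sum_subset (Finset.subset_univ _)
    intro s _ hs
    simp only [Finset.mem_filter, Finset.mem_univ, true_and, not_not] at hs
    rw [hs, zero_smul]
  have hsumTρ : ∑ y ∈ Tfin, ρ y = tstar := by
    rw [hTfin, Finset.sum_image (fun a _ b _ h => vec_injective n h)]
    rw [Finset.sum_congr rfl (fun s _ => hρvec s), hμstSum]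
    apply Finset.sum_subset (Finset.subset_univ _)
    intro s _ hs
    simp only [Finset.mem_filter, Finset.mem_univ, true_and, not_not] at hs
    exact hs
  obtain ⟨k, hk1, hkle, hint⟩ := cramer_step Tfin hT01 hTind ρ hρs hρnn hsumT
  choose m hm using hint
  have hknz : (k:ℝ) ≠ 0 := Nat.cast_ne_zero.2 (by omega)
  have hmsupp : ∀ y, m y ≠ 0 → ρ y ≠ 0 := by
    intro y hy h0
    apply hy
    have h6 := hm y
    rw [h0, mul_zero] at h6
    exact_mod_cast h6
  refine ⟨k, hk1, hkle, m, ?_, ?_, ?_, ?_⟩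
  · apply Set.Finite.subset Tfin.finite_toSet
    intro y hy
    exact hρs y (hmsupp y hy)
  · intro y hy
    obtain ⟨s, h1, rfl⟩ := hρne y (hmsupp y hy)
    exact hvecW s (hμstSol.2.1 s h1).1
  · have hsupf : Function.support (fun y => m y • (y : Fin n → ℝ)) ⊆ ↑Tfin := by
      intro y hy
      simp only [Function.mem_support] at hy
      have hy' : m y ≠ 0 := by
        intro h; rw [h, zero_smul] at hy; exact hy rfl
      exact hρs y (hmsupp y hy')
    rw [finsum_eq_sum_of_support_subset _ hsupf]
    have h7 : ∀ y ∈ Tfin, m y • y = (k:ℝ) • (ρ y • y) := by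
      intro y _
      rw [← Nat.cast_smul_eq_nsmul ℝ, hm y, mul_smul]
    rw [Finset.sum_congr rfl h7, ← Finset.smul_sum, hsumT, Nat.cast_smul_eq_nsmul]
  · have hsupf : Function.support (fun y => ((m y : ℝ))) ⊆ ↑Tfin := by
      intro y hy
      simp only [Function.mem_support, Nat.cast_ne_zero] at hy
      exact hρs y (hmsupp y hy)
    rw [finsum_eq_sum_of_support_subset _ hsupf]
    have h8 : ∑ y ∈ Tfin, ((m y : ℝ)) = (k:ℝ) * tstar := by
      rw [Finset.sum_congr rfl (fun y _ => hm y), ← Finset.mul_sum, hsumTρ]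
    rw [h8, hrmax_eq]
    rw [eq_comm, inv_eq_one_div, div_eq_div_iff htpos.ne' (by positivity)]
    ring
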